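/- Let n ≥ 1 be an integer, 1 < p < ∞, and δ ≥ 0. Suppose u : ℝ^{n−1} × ℝ → ℝ is continuously differentiable, u(x,0) = 0 for every x ∈ ℝ^{n−1}, and the integrals ∫_{ℝ^{n−1}×(0,∞)} |u|^p dx dy, ∫_{ℝ^{n−1}×(0,∞)} |∇u|^p dx dy, and ∫_{ℝ^{n−1}×(0,∞)} y^{−δp} |∂_y u|^p dx dy are all finite (∇u denotes the full gradient and ∂_y u the partial derivative in the last coordinate). Then ∫_{ℝ^{n−1}×(0,∞)} y^{−(δ+1)p} |u|^p dx dy ≤ (p/((δ+1)p−1))^p · ∫_{ℝ^{n−1}×(0,∞)} y^{−δp} |∂_y u|^p dx dy. -/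

import Mathlib

open MeasureTheory

/-- The Euclidean norm of the full gradient of `u : ℝ^{m} × ℝ → ℝ`. -/
noncomputable def euclGradNorm (m : ℕ) (u : EuclideanSpace ℝ (Fin m) × ℝ → ℝ)
    (z : EuclideanSpace ℝ (Fin m) × ℝ) : ℝ :=
  Real.sqrt ((∑ i : Fin m, (fderiv ℝ u z (EuclideanSpace.single i 1, 0)) ^ 2) +
    (fderiv ℝ u z ((0 : EuclideanSpace ℝ (Fin m)), (1 : ℝ))) ^ 2)

section Helpers
open Set
open scoped ENNReal

lemma lint_rpow_Ioo {y r : ℝ} (hy : 0 < y) (hr : -1 < r) :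
    ∫⁻ t in Ioo (0:ℝ) y, ENNReal.ofReal (t ^ r) = ENNReal.ofReal (y ^ (r+1) / (r+1)) := by
  have h1 : (volume : Measure ℝ).restrict (Ioo (0:ℝ) y) = volume.restrict (Ioc 0 y) := by
    rw [Measure.restrict_congr_set Ioo_ae_eq_Ioc]
  rw [h1]
  have hint : IntegrableOn (fun t : ℝ => t ^ r) (Ioc 0 y) := by
    rw [← intervalIntegrable_iff_integrableOn_Ioc_of_le hy.le]
    exact intervalIntegral.intervalIntegrable_rpow' hr
  rw [← ofReal_integral_eq_lintegral_ofReal hint]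
  · congr 1
    rw [← intervalIntegral.integral_of_le hy.le, integral_rpow (Or.inl hr)]
    rw [Real.zero_rpow (by linarith)]
    ring
  · filter_upwards [ae_restrict_mem measurableSet_Ioc] with t ht
    exact Real.rpow_nonneg ht.1.le r

lemma lint_rpow_Ioi {t e : ℝ} (ht : 0 < t) (he : e < -1) :
    ∫⁻ y in Ioi t, ENNReal.ofReal (y ^ e) = ENNReal.ofReal (t ^ (e+1) / (-(e+1))) := by
  rw [← ofReal_integral_eq_lintegral_ofReal (integrableOn_Ioi_rpow_of_lt he ht)]
  · rw [integral_Ioi_rpow_of_lt he ht]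
    congr 1
    rw [div_neg, neg_div]
  · filter_upwards [ae_restrict_mem measurableSet_Ioi] with y hy
    exact Real.rpow_nonneg (ht.trans hy).le e

lemma hardy_core {p δ : ℝ} (hp : 1 < p) (hδ : 0 ≤ δ) (g : ℝ → ℝ≥0∞) (hg : Measurable g) :
    ∫⁻ y in Ioi (0:ℝ), ENNReal.ofReal (y ^ (-((δ+1)*p))) * (∫⁻ t in Ioo 0 y, g t) ^ p
      ≤ ENNReal.ofReal ((p/((δ+1)*p-1))^p) *
        ∫⁻ t in Ioi (0:ℝ), ENNReal.ofReal (t ^ (-(δ*p))) * (g t) ^ p := by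
  have hp0 : (0:ℝ) < p := by linarith
  have hp1 : (0:ℝ) < p - 1 := by linarith
  have h1p : 1/p < (1:ℝ) := (div_lt_one hp0).mpr hp
  set q : ℝ := p / (p - 1) with hqdef
  have hpq : p.HolderConjugate q := Real.HolderConjugate.conjExponent hp
  set A : ℝ := δ + 1 - 1/p with hAdef
  have hA : 0 < A := by
    have : 1/p < 1 := by rw [div_lt_one hp0]; linarith
    simp only [hAdef]; linarith
  set c : ℝ := A/p - δ with hcdef
  set σ : ℝ := (δ+1)*p with hσdef
  set e₂ : ℝ := -σ + A*(p-1) with he2def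
  have he2 : e₂ = -(δ + 2 - 1/p) := by
    simp only [he2def, hσdef, hAdef]; field_simp; ring
  have he2lt : e₂ < -1 := by
    have h1p : 1/p < 1 := by rw [div_lt_one hp0]; linarith
    rw [he2]; linarith
  have he21 : e₂ + 1 = -A := by rw [he2]; simp only [hAdef]; ring
  set K : ℝ := (1/A)^(p-1) with hKdef
  have hK : 0 ≤ K := Real.rpow_nonneg (by positivity) _
  set h : ℝ → ℝ≥0∞ := fun t => g t ^ p * ENNReal.ofReal (t ^ (c*p)) with hhdef
  have hrm : ∀ r : ℝ, Measurable fun t : ℝ => ENNReal.ofReal (t ^ r) := fun r =>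
    ENNReal.measurable_ofReal.comp (measurable_id.pow measurable_const)
  have hhm : Measurable h := (hg.pow measurable_const).mul (hrm (c*p))
  set X : ℝ → ℝ≥0∞ := fun y => ∫⁻ t in Ioo (0:ℝ) y, h t with hXdef
  -- pointwise Hölder claim
  have claim1 : ∀ y ∈ Ioi (0:ℝ), ENNReal.ofReal (y ^ (-σ)) * (∫⁻ t in Ioo (0:ℝ) y, g t) ^ p
      ≤ ENNReal.ofReal K * (ENNReal.ofReal (y ^ e₂) * X y) := by
    intro y hy
    rw [mem_Ioi] at hy
    have hFsplit : (∫⁻ t in Ioo (0:ℝ) y, g t)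
        = ∫⁻ t in Ioo (0:ℝ) y,
            ((fun t => g t * ENNReal.ofReal (t ^ c)) * fun t => ENNReal.ofReal (t ^ (-c))) t := by
      apply setLIntegral_congr_fun measurableSet_Ioo
      intro t ht
      beta_reduce
      simp only [Pi.mul_apply]
      rw [mul_assoc, ← ENNReal.ofReal_mul (Real.rpow_nonneg ht.1.le _),
        ← Real.rpow_add ht.1, add_neg_cancel, Real.rpow_zero, ENNReal.ofReal_one, mul_one]
    have hm1 : Measurable fun t : ℝ => g t * ENNReal.ofReal (t ^ c) := hg.mul (hrm c)
    have hold := ENNReal.lintegral_mul_le_Lp_mul_Lq (μ := volume.restrict (Ioo (0:ℝ) y)) hpq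
      (f := fun t : ℝ => g t * ENNReal.ofReal (t ^ c)) (g := fun t : ℝ => ENNReal.ofReal (t ^ (-c)))
      hm1.aemeasurable (hrm (-c)).aemeasurable
    rw [← hFsplit] at hold
    have hXeq : ∫⁻ t in Ioo (0:ℝ) y, (g t * ENNReal.ofReal (t ^ c)) ^ p = X y := by
      apply setLIntegral_congr_fun measurableSet_Ioo
      intro t ht
      beta_reduce
      rw [ENNReal.mul_rpow_of_nonneg _ _ hp0.le,
        ENNReal.ofReal_rpow_of_nonneg (Real.rpow_nonneg ht.1.le _) hp0.le,
        ← Real.rpow_mul ht.1.le]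
    have hYeq : ∫⁻ t in Ioo (0:ℝ) y, (ENNReal.ofReal (t ^ (-c))) ^ q
        = ENNReal.ofReal (y ^ A / A) := by
      have hcq : -c * q = δ - 1/p := by
        simp only [hcdef, hAdef, hqdef]; field_simp; ring
      have : ∫⁻ t in Ioo (0:ℝ) y, (ENNReal.ofReal (t ^ (-c))) ^ q
          = ∫⁻ t in Ioo (0:ℝ) y, ENNReal.ofReal (t ^ (δ - 1/p)) := by
        apply setLIntegral_congr_fun measurableSet_Ioo
        intro t ht
        beta_reduce
        rw [ENNReal.ofReal_rpow_of_nonneg (Real.rpow_nonneg ht.1.le _) hpq.symm.nonneg,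
          ← Real.rpow_mul ht.1.le, hcq]
      rw [this, lint_rpow_Ioo hy (by linarith)]
      congr 2 <;> simp only [hAdef] <;> ring
    rw [hXeq, hYeq] at hold
    have hpow := ENNReal.rpow_le_rpow hold hp0.le
    have hXp : (X y ^ (1/p) * ENNReal.ofReal (y ^ A / A) ^ (1/q)) ^ p
        = X y * (ENNReal.ofReal (y ^ A / A)) ^ (p-1) := by
      rw [ENNReal.mul_rpow_of_nonneg _ _ hp0.le, ← ENNReal.rpow_mul, ← ENNReal.rpow_mul]
      congr 1
      · rw [one_div_mul_cancel hp0.ne', ENNReal.rpow_one]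
      · congr 1
        rw [hqdef]; field_simp
    rw [hXp] at hpow
    have hfact : (ENNReal.ofReal (y ^ A / A)) ^ (p-1)
        = ENNReal.ofReal (y ^ (A*(p-1))) * ENNReal.ofReal K := by
      rw [ENNReal.ofReal_rpow_of_nonneg (by positivity) hp1.le, ← ENNReal.ofReal_mul (by positivity)]
      congr 1
      rw [div_eq_mul_inv, Real.mul_rpow (Real.rpow_nonneg hy.le _) (by positivity),
        ← Real.rpow_mul hy.le, hKdef, one_div, Real.inv_rpow hA.le]
    calc ENNReal.ofReal (y ^ (-σ)) * (∫⁻ t in Ioo (0:ℝ) y, g t) ^ p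
        ≤ ENNReal.ofReal (y ^ (-σ)) * (X y * (ENNReal.ofReal (y ^ A / A)) ^ (p-1)) :=
          by gcongr
      _ = ENNReal.ofReal K * (ENNReal.ofReal (y ^ e₂) * X y) := by
          rw [hfact]
          have : ENNReal.ofReal (y ^ e₂)
              = ENNReal.ofReal (y ^ (-σ)) * ENNReal.ofReal (y ^ (A*(p-1))) := by
            rw [← ENNReal.ofReal_mul (Real.rpow_nonneg hy.le _), ← Real.rpow_add hy, he2def]
          rw [this]; ring
  -- monotone step: bound the LHS
  have step1 : ∫⁻ y in Ioi (0:ℝ), ENNReal.ofReal (y ^ (-σ)) * (∫⁻ t in Ioo 0 y, g t) ^ p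
      ≤ ENNReal.ofReal K * ∫⁻ y in Ioi (0:ℝ), ENNReal.ofReal (y ^ e₂) * X y := by
    rw [← lintegral_const_mul' _ _ ENNReal.ofReal_ne_top]
    refine lintegral_mono_ae ?_
    filter_upwards [ae_restrict_mem measurableSet_Ioi] with y hy
    exact claim1 y hy
  -- Tonelli
  set S : Set (ℝ × ℝ) := {z : ℝ × ℝ | 0 < z.2 ∧ z.2 < z.1} with hSdef
  have hS : MeasurableSet S :=
    (measurableSet_lt measurable_const measurable_snd).inter
      (measurableSet_lt measurable_snd measurable_fst)
  set Φ : ℝ → ℝ → ℝ≥0∞ := fun y t =>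
    S.indicator (fun z => h z.2) (y, t) * ENNReal.ofReal (y ^ e₂) with hΦdef
  have hΦm : Measurable (Function.uncurry Φ) := by
    apply Measurable.mul
    · exact (hhm.comp measurable_snd).indicator hS
    · exact ENNReal.measurable_ofReal.comp (measurable_fst.pow measurable_const)
  have hXrw : ∀ y : ℝ, ENNReal.ofReal (y ^ e₂) * X y = ∫⁻ t, Φ y t := by
    intro y
    have hind : ∀ t : ℝ, S.indicator (fun z : ℝ × ℝ => h z.2) (y, t)
        = (Ioo (0:ℝ) y).indicator h t := by
      intro t
      simp only [Set.indicator_apply, hSdef, mem_setOf_eq, mem_Ioo]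
    simp only [hΦdef, hind]
    rw [lintegral_mul_const _ (hhm.indicator measurableSet_Ioo),
      lintegral_indicator measurableSet_Ioo, mul_comm]
  have hinner : ∀ t : ℝ, ∫⁻ y in Ioi (0:ℝ), Φ y t
      = (Ioi (0:ℝ)).indicator
          (fun t => ENNReal.ofReal (1/A) * (ENNReal.ofReal (t ^ (-(δ*p))) * g t ^ p)) t := by
    intro t
    rcases le_or_gt t 0 with ht | ht
    · have : ∀ y : ℝ, Φ y t = 0 := by
        intro y
        simp only [hΦdef]
        rw [Set.indicator_of_notMem, zero_mul]
        simp only [hSdef, mem_setOf_eq, not_and]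
        intro h0; exact absurd h0 (not_lt.mpr ht)
      simp only [this, lintegral_zero]
      rw [Set.indicator_of_notMem (by simpa using ht)]
    · have hΦt : ∀ y : ℝ, Φ y t
          = (Ioi t).indicator (fun y => h t * ENNReal.ofReal (y ^ e₂)) y := by
        intro y
        simp only [hΦdef, Set.indicator_apply, hSdef, mem_setOf_eq, mem_Ioi]
        by_cases hty : t < y
        · simp [ht, hty]
        · simp [hty]
      simp only [hΦt]
      rw [lintegral_indicator measurableSet_Ioi, Measure.restrict_restrict measurableSet_Ioi,
        inter_eq_left.mpr (Ioi_subset_Ioi ht.le),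
        lintegral_const_mul _ (hrm e₂),
        lint_rpow_Ioi ht he2lt, Set.indicator_of_mem (mem_Ioi.mpr ht)]
      have hcpA : c * p + -A = -(δ*p) := by
        simp only [hcdef]; field_simp; ring
      rw [hhdef]
      simp only []
      rw [he21, neg_neg, div_eq_mul_inv, ENNReal.ofReal_mul (Real.rpow_nonneg ht.le _),
        ← one_div, ← hcpA, Real.rpow_add ht,
        ENNReal.ofReal_mul (Real.rpow_nonneg ht.le _)]
      ring
  calc ∫⁻ y in Ioi (0:ℝ), ENNReal.ofReal (y ^ (-σ)) * (∫⁻ t in Ioo 0 y, g t) ^ p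
      ≤ ENNReal.ofReal K * ∫⁻ y in Ioi (0:ℝ), ENNReal.ofReal (y ^ e₂) * X y := step1
    _ = ENNReal.ofReal K * ∫⁻ t, ∫⁻ y in Ioi (0:ℝ), Φ y t := by
        congr 1
        simp_rw [hXrw]
        exact lintegral_lintegral_swap hΦm.aemeasurable
    _ = ENNReal.ofReal K * (ENNReal.ofReal (1/A) *
          ∫⁻ t in Ioi (0:ℝ), ENNReal.ofReal (t ^ (-(δ*p))) * g t ^ p) := by
        congr 1
        simp_rw [hinner]
        rw [lintegral_indicator measurableSet_Ioi,
          lintegral_const_mul' _ _ ENNReal.ofReal_ne_top]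
    _ = ENNReal.ofReal ((p/((δ+1)*p-1))^p) *
          ∫⁻ t in Ioi (0:ℝ), ENNReal.ofReal (t ^ (-(δ*p))) * g t ^ p := by
        rw [← mul_assoc, ← ENNReal.ofReal_mul hK]
        congr 2
        have hApos : (0:ℝ) < (δ+1)*p - 1 := by
          have hh : (δ+1)*p - 1 = A * p := by simp only [hAdef]; field_simp
          rw [hh]; positivity
        have h1A : 1/A = p/((δ+1)*p-1) := by
          rw [hAdef, div_eq_div_iff (by linarith) hApos.ne']
          field_simp
        rw [hKdef, h1A, ← Real.rpow_add_one (div_pos hp0 hApos).ne' (p-1)]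
        norm_num

theorem weighted_hardy_halfspace_aux (n : ℕ) (hn : 1 ≤ n) (p δ : ℝ)
    (hp : 1 < p) (hδ : 0 ≤ δ)
    (u : EuclideanSpace ℝ (Fin (n - 1)) × ℝ → ℝ)
    (hu : ContDiff ℝ 1 u)
    (h0 : ∀ x : EuclideanSpace ℝ (Fin (n - 1)), u (x, 0) = 0)
    (hu_int : ∫⁻ z in {z : EuclideanSpace ℝ (Fin (n - 1)) × ℝ | 0 < z.2},
        ENNReal.ofReal (|u z| ^ p) ∂volume < ⊤)
    (hdy_int : ∫⁻ z in {z : EuclideanSpace ℝ (Fin (n - 1)) × ℝ | 0 < z.2},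
        ENNReal.ofReal (z.2 ^ (-(δ * p)) *
          |fderiv ℝ u z ((0 : EuclideanSpace ℝ (Fin (n - 1))), (1 : ℝ))| ^ p) ∂volume < ⊤) :
    ∫⁻ z in {z : EuclideanSpace ℝ (Fin (n - 1)) × ℝ | 0 < z.2},
        ENNReal.ofReal (z.2 ^ (-((δ + 1) * p)) * |u z| ^ p) ∂volume
      ≤ ENNReal.ofReal ((p / ((δ + 1) * p - 1)) ^ p) *
        ∫⁻ z in {z : EuclideanSpace ℝ (Fin (n - 1)) × ℝ | 0 < z.2},
          ENNReal.ofReal (z.2 ^ (-(δ * p)) *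
            |fderiv ℝ u z ((0 : EuclideanSpace ℝ (Fin (n - 1))), (1 : ℝ))| ^ p) ∂volume := by
  have hp0 : (0:ℝ) < p := by linarith
  set d : EuclideanSpace ℝ (Fin (n - 1)) × ℝ → ℝ := fun z => fderiv ℝ u z ((0 : EuclideanSpace ℝ (Fin (n - 1))), (1 : ℝ)) with hddef
  have hdc : Continuous d := by
    exact (hu.continuous_fderiv one_ne_zero).clm_apply continuous_const
  -- FTC bound
  have claimA : ∀ (x : EuclideanSpace ℝ (Fin (n - 1))) (y : ℝ), 0 < y →
      ENNReal.ofReal |u (x, y)| ≤ ∫⁻ t in Ioo (0:ℝ) y, ENNReal.ofReal |d (x, t)| := by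
    intro x y hy
    have hder : ∀ t : ℝ, HasDerivAt (fun s : ℝ => u (x, s)) (d (x, t)) t := by
      intro t
      have h1 : HasFDerivAt u (fderiv ℝ u (x, t)) (x, t) :=
        ((hu.differentiable one_ne_zero) (x, t)).hasFDerivAt
      have h2 : HasDerivAt (fun s : ℝ => ((x, s) : EuclideanSpace ℝ (Fin (n - 1)) × ℝ)) ((0 : EuclideanSpace ℝ (Fin (n - 1))), (1 : ℝ)) t :=
        (hasDerivAt_const t x).prodMk (hasDerivAt_id t)
      exact h1.comp_hasDerivAt t h2
    have hcont : Continuous fun t : ℝ => d (x, t) := hdc.comp (Continuous.prodMk_right x)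
    have hftc : ∫ t in (0:ℝ)..y, d (x, t) = u (x, y) - u (x, 0) :=
      intervalIntegral.integral_eq_sub_of_hasDerivAt (fun t _ => hder t)
        (hcont.intervalIntegrable 0 y)
    have huy : u (x, y) = ∫ t in (0:ℝ)..y, d (x, t) := by
      rw [hftc, h0 x, sub_zero]
    have habs : |u (x, y)| ≤ ∫ t in (0:ℝ)..y, |d (x, t)| := by
      rw [huy]
      exact intervalIntegral.abs_integral_le_integral_abs hy.le
    have hIoc : ∫ t in (0:ℝ)..y, |d (x, t)| = ∫ t in Ioc (0:ℝ) y, |d (x, t)| :=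
      intervalIntegral.integral_of_le hy.le
    have hint : IntegrableOn (fun t : ℝ => |d (x, t)|) (Ioc 0 y) :=
      (hcont.abs).integrableOn_Ioc
    calc ENNReal.ofReal |u (x, y)| ≤ ENNReal.ofReal (∫ t in Ioc (0:ℝ) y, |d (x, t)|) := by
          rw [← hIoc]; exact ENNReal.ofReal_le_ofReal habs
      _ = ∫⁻ t in Ioc (0:ℝ) y, ENNReal.ofReal |d (x, t)| :=
          ofReal_integral_eq_lintegral_ofReal hint
            (ae_of_all _ fun t => abs_nonneg _)
      _ = ∫⁻ t in Ioo (0:ℝ) y, ENNReal.ofReal |d (x, t)| := by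
          rw [Measure.restrict_congr_set Ioo_ae_eq_Ioc]
  -- iterated integral reduction
  have prodset : {z : EuclideanSpace ℝ (Fin (n - 1)) × ℝ | 0 < z.2} = (univ : Set (EuclideanSpace ℝ (Fin (n - 1)))) ×ˢ Ioi (0:ℝ) := by
    ext z; simp [Set.mem_prod]
  have prodrw : ∀ f : EuclideanSpace ℝ (Fin (n - 1)) × ℝ → ℝ≥0∞, Measurable f →
      ∫⁻ z in {z : EuclideanSpace ℝ (Fin (n - 1)) × ℝ | 0 < z.2}, f z ∂volume
        = ∫⁻ x, ∫⁻ y in Ioi (0:ℝ), f (x, y) := by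
    intro f hf
    rw [prodset, Measure.volume_eq_prod, ← Measure.prod_restrict, Measure.restrict_univ]
    exact lintegral_prod f hf.aemeasurable
  have hum : Measurable fun z : EuclideanSpace ℝ (Fin (n - 1)) × ℝ => ENNReal.ofReal (z.2 ^ (-((δ+1)*p)) * |u z| ^ p) :=
    ENNReal.measurable_ofReal.comp ((measurable_snd.pow measurable_const).mul
      ((hu.continuous.abs.measurable).pow measurable_const))
  have hdm : Measurable fun z : EuclideanSpace ℝ (Fin (n - 1)) × ℝ => ENNReal.ofReal (z.2 ^ (-(δ*p)) * |d z| ^ p) :=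
    ENNReal.measurable_ofReal.comp ((measurable_snd.pow measurable_const).mul
      ((hdc.abs.measurable).pow measurable_const))
  rw [prodrw _ hum, prodrw _ hdm]
  rw [← lintegral_const_mul' _ _ ENNReal.ofReal_ne_top]
  refine lintegral_mono fun x => ?_
  -- apply the 1D Hardy inequality in the fiber
  have hgm : Measurable fun t : ℝ => ENNReal.ofReal |d (x, t)| :=
    ENNReal.measurable_ofReal.comp ((hdc.comp (Continuous.prodMk_right x)).abs.measurable)
  have key := hardy_core hp hδ (fun t => ENNReal.ofReal |d (x, t)|) hgm
  calc ∫⁻ y in Ioi (0:ℝ), ENNReal.ofReal (y ^ (-((δ+1)*p)) * |u (x, y)| ^ p)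
      ≤ ∫⁻ y in Ioi (0:ℝ), ENNReal.ofReal (y ^ (-((δ+1)*p)))
          * (∫⁻ t in Ioo (0:ℝ) y, ENNReal.ofReal |d (x, t)|) ^ p := by
        refine lintegral_mono_ae ?_
        filter_upwards [ae_restrict_mem measurableSet_Ioi] with y hy
        rw [mem_Ioi] at hy
        rw [ENNReal.ofReal_mul (Real.rpow_nonneg hy.le _),
          ← ENNReal.ofReal_rpow_of_nonneg (abs_nonneg _) hp0.le]
        gcongr; exact claimA x y hy
    _ ≤ ENNReal.ofReal ((p/((δ+1)*p-1))^p) *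
          ∫⁻ t in Ioi (0:ℝ), ENNReal.ofReal (t ^ (-(δ*p))) * (ENNReal.ofReal |d (x, t)|) ^ p :=
        key
    _ = ENNReal.ofReal ((p/((δ+1)*p-1))^p) *
          ∫⁻ y in Ioi (0:ℝ), ENNReal.ofReal (y ^ (-(δ*p)) * |d (x, y)| ^ p) := by
        congr 1
        apply setLIntegral_congr_fun measurableSet_Ioi
        intro t ht
        beta_reduce
        rw [ENNReal.ofReal_mul (Real.rpow_nonneg (le_of_lt ht) _),
          ← ENNReal.ofReal_rpow_of_nonneg (abs_nonneg _) hp0.le]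


end Helpers

/-- A `C¹` function on the half-space `ℝ^{n-1} × (0,∞)` with vanishing boundary trace and
`u, ∇u ∈ L^p`, `y^{-δ} ∂_y u ∈ L^p` gains one full power of boundary decay:
`∫ y^{-(δ+1)p} |u|^p ≤ (p/((δ+1)p-1))^p ∫ y^{-δp} |∂_y u|^p`. -/
theorem weighted_hardy_halfspace_C1 (n : ℕ) (hn : 1 ≤ n) (p δ : ℝ)
    (hp : 1 < p) (hδ : 0 ≤ δ)
    (u : EuclideanSpace ℝ (Fin (n - 1)) × ℝ → ℝ)
    (hu : ContDiff ℝ 1 u)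
    (h0 : ∀ x : EuclideanSpace ℝ (Fin (n - 1)), u (x, 0) = 0)
    (hu_int : ∫⁻ z in {z : EuclideanSpace ℝ (Fin (n - 1)) × ℝ | 0 < z.2},
        ENNReal.ofReal (|u z| ^ p) ∂volume < ⊤)
    (hgrad_int : ∫⁻ z in {z : EuclideanSpace ℝ (Fin (n - 1)) × ℝ | 0 < z.2},
        ENNReal.ofReal ((euclGradNorm (n - 1) u z) ^ p) ∂volume < ⊤)
    (hdy_int : ∫⁻ z in {z : EuclideanSpace ℝ (Fin (n - 1)) × ℝ | 0 < z.2},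
        ENNReal.ofReal (z.2 ^ (-(δ * p)) *
          |fderiv ℝ u z ((0 : EuclideanSpace ℝ (Fin (n - 1))), (1 : ℝ))| ^ p) ∂volume < ⊤) :
    ∫⁻ z in {z : EuclideanSpace ℝ (Fin (n - 1)) × ℝ | 0 < z.2},
        ENNReal.ofReal (z.2 ^ (-((δ + 1) * p)) * |u z| ^ p) ∂volume
      ≤ ENNReal.ofReal ((p / ((δ + 1) * p - 1)) ^ p) *
        ∫⁻ z in {z : EuclideanSpace ℝ (Fin (n - 1)) × ℝ | 0 < z.2},
          ENNReal.ofReal (z.2 ^ (-(δ * p)) *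
            |fderiv ℝ u z ((0 : EuclideanSpace ℝ (Fin (n - 1))), (1 : ℝ))| ^ p) ∂volume :=
  weighted_hardy_halfspace_aux n hn p δ hp hδ u hu h0 hu_int hdy_int
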